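/- For positive integers α, β and n, we have ∏_{i=1}^n d_{α+β+n+i−3} · (n−i)!·(β+i−2)!/(α+i−1)_{β+n−1} ≥ 1, where d_m = lcm(1,...,m). -/

import Mathlib

/-- `d_m` denotes `lcm(1,…,m)`. -/
def dlcm (m : ℕ) : ℕ := (Finset.Icc 1 m).lcm id

open Finset Polynomial Matrix



lemma factorial_cast_pos (m : ℕ) : (0:ℚ) < (m.factorial : ℚ) := by
  exact_mod_cast m.factorial_pos

lemma betaSum : ∀ (b y : ℕ), ∑ k ∈ range (b+1), ((-1:ℚ)^k * (b.choose k) / ((y:ℚ)+k+1)) = (b.factorial * y.factorial) / ((y+b+1).factorial) := by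
  intro b
  induction b with
  | zero =>
    intro y
    have : ((y:ℚ)+1) ≠ 0 := by positivity
    have : ((y.factorial : ℚ)) ≠ 0 := ne_of_gt (factorial_cast_pos y)
    simp [Nat.factorial_succ]
    field_simp
  | succ b ih =>
    intro y
    rw [Finset.sum_range_succ']
    push_cast
    have h1 : ∀ k ∈ range (b+1), (-1:ℚ)^(k+1) * (((b+1).choose (k+1) : ℕ) : ℚ) / ((y:ℚ)+((k:ℚ)+1)+1)
        = -((-1:ℚ)^k * (b.choose k) / (((y:ℚ)+1)+(k:ℚ)+1)) + (-((-1:ℚ)^k * (b.choose (k+1)) / ((y:ℚ)+((k:ℚ)+1)+1))) := by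
      intro k _
      have h2 : ((y:ℚ)+1)+(k:ℚ)+1 ≠ 0 := by positivity
      have h3 : (y:ℚ)+((k:ℚ)+1)+1 ≠ 0 := by positivity
      rw [Nat.choose_succ_succ]
      push_cast
      rw [show (y:ℚ)+1+(k:ℚ)+1 = (y:ℚ)+((k:ℚ)+1)+1 by ring]
      field_simp
      ring
    rw [Finset.sum_congr rfl h1, Finset.sum_add_distrib]
    have ih1 := ih (y+1)
    push_cast at ih1
    have e1 : ∑ k ∈ range (b+1), -((-1:ℚ)^k * (b.choose k) / (((y:ℚ)+1)+(k:ℚ)+1)) = -((b.factorial * (y+1).factorial : ℕ) / ((y+1+b+1).factorial : ℕ) : ℚ) := by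
      rw [Finset.sum_neg_distrib, ih1]
      push_cast
      ring
    -- second sum
    have e2 : ∑ k ∈ range (b+1), -((-1:ℚ)^k * (b.choose (k+1)) / ((y:ℚ)+((k:ℚ)+1)+1)) = ((b.factorial * y.factorial : ℕ) / ((y+b+1).factorial : ℕ) : ℚ) - 1/((y:ℚ)+1) := by
      have hS1 : ∑ j ∈ range (b+2), ((-1:ℚ)^j * (b.choose j) / ((y:ℚ)+j+1)) = (b.factorial * y.factorial : ℕ) / ((y+b+1).factorial : ℕ) := by
        rw [Finset.sum_range_succ, ih y]
        simp [Nat.choose_succ_self]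
      rw [Finset.sum_range_succ'] at hS1
      push_cast at hS1 ⊢
      have : ∑ k ∈ range (b+1), -((-1:ℚ)^k * (b.choose (k+1)) / ((y:ℚ)+((k:ℚ)+1)+1)) = ∑ k ∈ range (b+1), ((-1:ℚ)^(k+1) * (b.choose (k+1)) / ((y:ℚ)+((k:ℚ)+1)+1)) := by
        apply Finset.sum_congr rfl
        intro k _
        ring
      rw [this]
      norm_num at hS1
      rw [one_div]; linarith [hS1]
    rw [e1, e2]
    have hf1 : ((y+1+b+1).factorial : ℚ) = ((y+b+1+1).factorial : ℚ) := by norm_num; ring_nf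
    have hf2 : ((y+(b+1)+1).factorial : ℚ) = ((y+b+1+1).factorial : ℚ) := by norm_num; ring_nf
    have hd1 : ((y+b+1).factorial : ℚ) ≠ 0 := ne_of_gt (factorial_cast_pos _)
    have hy1 : ((y:ℚ)+1) ≠ 0 := by positivity
    rw [Nat.factorial_succ (y+b+1)] at hf1 hf2
    push_cast at hf1 hf2 ⊢
    rw [hf1, hf2, Nat.factorial_succ b, Nat.factorial_succ y]
    push_cast
    simp only [Nat.choose_zero_right, Nat.cast_one]
    field_simp
    ring


-- E1
lemma prodLin (x : ℕ) : ∀ j : ℕ, ∏ k ∈ range j, ((x:ℚ)+k+1) = ((x+j).factorial : ℚ) / (x.factorial : ℚ) := by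
  intro j
  induction j with
  | zero => simp [div_self, Nat.cast_ne_zero, Nat.factorial_ne_zero]
  | succ j ih =>
    rw [Finset.prod_range_succ, ih]
    have : ((x.factorial : ℚ)) ≠ 0 := by exact_mod_cast x.factorial_ne_zero
    rw [show x + (j+1) = (x+j)+1 by ring, Nat.factorial_succ]
    push_cast
    field_simp

-- E3'
lemma prodLinRev (b : ℕ) : ∀ i : ℕ, ∏ k ∈ range i, ((b:ℚ) + i - k) = ((b+i).factorial : ℚ) / (b.factorial : ℚ) := by
  intro i
  induction i with
  | zero => simp [div_self, Nat.cast_ne_zero, Nat.factorial_ne_zero]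
  | succ i ih =>
    rw [Finset.prod_range_succ']
    have h1 : ∀ k ∈ range i, ((b:ℚ) + (i+1:ℕ) - ((k:ℕ)+1:ℕ)) = ((b:ℚ) + i - k) := by
      intro k _; push_cast; ring
    rw [Finset.prod_congr rfl h1, ih]
    have : ((b.factorial : ℚ)) ≠ 0 := by exact_mod_cast b.factorial_ne_zero
    rw [show b + (i+1) = (b+i)+1 by ring, Nat.factorial_succ]
    push_cast
    field_simp
    ring

lemma prodFac (m : ℕ) : ∏ k ∈ range m, ((k:ℚ)+1) = (m.factorial : ℚ) := by
  have := prodLin 0 m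
  simpa using this

/-- the column polynomial -/
noncomputable def qpoly (n b j : ℕ) : Polynomial ℚ :=
  (∏ k ∈ range j, (X + C ((k:ℚ)+1))) * (∏ k ∈ range (n-1-j), (X + C ((j:ℚ)+(b:ℚ)+2+(k:ℚ))))

lemma qpoly_monic (n b j : ℕ) : (qpoly n b j).Monic := by
  apply Monic.mul <;> exact monic_prod_of_monic _ _ (fun k _ => monic_X_add_C _)

lemma qpoly_natDegree (n b j : ℕ) (hj : j ≤ n-1) : (qpoly n b j).natDegree = n-1 := by
  unfold qpoly
  rw [Polynomial.Monic.natDegree_mul (monic_prod_of_monic _ _ (fun k _ => monic_X_add_C _))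
    (monic_prod_of_monic _ _ (fun k _ => monic_X_add_C _))]
  rw [Polynomial.natDegree_prod_of_monic _ _ (fun k _ => monic_X_add_C _),
      Polynomial.natDegree_prod_of_monic _ _ (fun k _ => monic_X_add_C _)]
  simp only [Polynomial.natDegree_X_add_C, Finset.sum_const, Finset.card_range, smul_eq_mul, mul_one]
  omega

lemma qpoly_eval (n b j : ℕ) (t : ℚ) :
    (qpoly n b j).eval t = (∏ k ∈ range j, (t+k+1)) * (∏ k ∈ range (n-1-j), (t+j+b+2+k)) := by
  unfold qpoly
  rw [eval_mul, eval_prod, eval_prod]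
  exact congrArg₂ (· * ·) (Finset.prod_congr rfl fun k _ => by simp; ring) (Finset.prod_congr rfl fun k _ => by simp; ring)


lemma eval_mat {n : ℕ} (v : Fin n → ℚ) (p : Fin n → Polynomial ℚ)
    (h : ∀ j, (p j).natDegree < n) :
    Matrix.of (fun i j => ((p j).eval (v i))) =
      (Matrix.vandermonde v) * (Matrix.of (fun (i j : Fin n) => (p j).coeff i)) := by
  ext i j
  rw [Matrix.mul_apply, Matrix.of_apply, Polynomial.eval, Polynomial.eval₂]
  simp only [eq_intCast, Int.cast_id, Matrix.vandermonde]
  have : (p j).support ⊆ range n := supp_subset_range (h j)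
  rw [Polynomial.sum_eq_of_subset _ (fun j => zero_mul ((v i) ^ j)) this,
    ← Fin.sum_univ_eq_sum_range]
  congr
  ext k
  rw [mul_comm, Matrix.of_apply, RingHom.id_apply]
  rfl

lemma det_eval_mat {n : ℕ} (v : Fin n → ℚ) (p : Fin n → Polynomial ℚ)
    (h : ∀ j, (p j).natDegree < n) :
    (Matrix.of (fun i j => ((p j).eval (v i)))).det =
      (Matrix.vandermonde v).det * (Matrix.of (fun (i j : Fin n) => (p j).coeff i)).det := by
  rw [eval_mat v p h, Matrix.det_mul]


section Det

variable (a b n : ℕ)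

noncomputable def Amat : Matrix (Fin n) (Fin n) ℚ :=
  Matrix.of fun i j => (b.factorial : ℚ) * ((a+i+j).factorial : ℚ) / ((a+b+i+j+1).factorial : ℚ)

noncomputable def srow (i : Fin n) : ℚ :=
  ((a+b+n+i).factorial : ℚ) / ((b.factorial : ℚ) * ((a+i).factorial : ℚ))

lemma fne (m : ℕ) : ((m.factorial : ℚ)) ≠ 0 := by exact_mod_cast m.factorial_ne_zero

lemma srow_mul_eval (i j : Fin n) :
    srow a b n i * Amat a b n i j = (qpoly n b j).eval ((a:ℚ) + (i:ℕ)) := by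
  rw [qpoly_eval]
  have h1 : ∏ k ∈ range (j:ℕ), ((a:ℚ) + (i:ℕ) + k + 1) = (((a+i+j).factorial : ℚ)) / (((a+i).factorial : ℚ)) := by
    have := prodLin (a+i) j
    rw [Finset.prod_congr rfl (fun k _ => by push_cast; ring : ∀ k ∈ range (j:ℕ), ((a:ℚ) + (i:ℕ) + k + 1) = (((a+i:ℕ)):ℚ) + k + 1), this]
  have h2 : ∏ k ∈ range (n-1-(j:ℕ)), ((a:ℚ) + (i:ℕ) + (j:ℕ) + (b:ℚ) + 2 + k) = (((a+b+n+i).factorial : ℚ)) / (((a+b+i+j+1).factorial : ℚ)) := by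
    have := prodLin (a+i+j+b+1) (n-1-j)
    rw [Finset.prod_congr rfl (fun k _ => by push_cast; ring : ∀ k ∈ range (n-1-(j:ℕ)), ((a:ℚ) + (i:ℕ) + (j:ℕ) + (b:ℚ) + 2 + k) = (((a+i+j+b+1:ℕ)):ℚ) + k + 1), this]
    have e1 : a+i+j+b+1 + (n-1-j) = a+b+n+i := by omega
    have e2 : a+i+j+b+1 = a+b+i+j+1 := by ring
    rw [e1, e2]
  rw [h1, h2]
  unfold srow Amat
  rw [Matrix.of_apply]
  field_simp [fne]

lemma step1 : (∏ i, srow a b n i) * (Amat a b n).det =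
    (Matrix.vandermonde (fun i : Fin n => (a:ℚ) + (i:ℕ))).det *
      (Matrix.of (fun (i j : Fin n) => (qpoly n b j).coeff i)).det := by
  have hdeg : ∀ j : Fin n, (qpoly n b (j:ℕ)).natDegree < n := by
    intro j
    have := j.isLt
    rw [qpoly_natDegree n b j (by omega)]
    omega
  rw [← det_eval_mat _ _ hdeg]
  rw [← Matrix.det_mul_column (srow a b n)]
  congr 1
  ext i j
  simpa using srow_mul_eval a b n i j


noncomputable def yv (b : ℕ) {n : ℕ} (i : Fin n) : ℚ := -((b:ℚ) + (i:ℕ) + 1)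

lemma tri_zero {n : ℕ} (b : ℕ) (i j : Fin n) (h : (j:ℕ) < (i:ℕ)) :
    (qpoly n b j).eval (yv b i) = 0 := by
  rw [qpoly_eval]
  apply mul_eq_zero_of_right
  apply Finset.prod_eq_zero (i := (i:ℕ) - (j:ℕ) - 1)
  · rw [Finset.mem_range]
    have := i.isLt
    omega
  · have h1 : ((i:ℕ) - (j:ℕ) - 1 : ℕ) + (j:ℕ) + 1 = (i:ℕ) := by omega
    have h2 : ((((i:ℕ) - (j:ℕ) - 1 : ℕ)):ℚ) + (j:ℕ) + 1 = ((i:ℕ):ℚ) := by exact_mod_cast congrArg (Nat.cast : ℕ → ℚ) h1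
    unfold yv
    linarith [h2]

lemma neg_prod {s : Finset ℕ} (f : ℕ → ℚ) : ∏ k ∈ s, -(f k) = (-1:ℚ)^s.card * ∏ k ∈ s, f k := by
  rw [show (fun k => -(f k)) = fun k => (-1) * f k from funext fun k => by ring,
    Finset.prod_mul_distrib, Finset.prod_const]

lemma tri_diag {n : ℕ} (b : ℕ) (i : Fin n) :
    (qpoly n b i).eval (yv b i) =
      (-1:ℚ)^(i:ℕ) * (((b+i).factorial : ℚ) / (b.factorial : ℚ)) * ((n-1-(i:ℕ)).factorial : ℚ) := by
  rw [qpoly_eval]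
  have h1 : ∀ k ∈ range (i:ℕ), (yv b i + k + 1) = -(((b:ℚ) + (i:ℕ)) - k) := by
    intro k _; unfold yv; ring
  have h2 : ∀ k ∈ range (n-1-(i:ℕ)), (yv b i + (i:ℕ) + (b:ℚ) + 2 + k) = ((k:ℚ) + 1) := by
    intro k _; unfold yv; ring
  rw [Finset.prod_congr rfl h1, Finset.prod_congr rfl h2, neg_prod, Finset.card_range,
    prodLinRev b i, prodFac]

lemma step2 {n : ℕ} (b : ℕ) :
    (Matrix.of (fun i j : Fin n => (qpoly n b j).eval (yv b i))).det =
      (∏ i : Fin n, (-1:ℚ)^(i:ℕ)) *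
        ∏ i : Fin n, ((((b+i).factorial : ℚ) / (b.factorial : ℚ)) * ((n-1-(i:ℕ)).factorial : ℚ)) := by
  rw [Matrix.det_of_upperTriangular]
  · rw [← Finset.prod_mul_distrib]
    apply Finset.prod_congr rfl
    intro i _
    rw [Matrix.of_apply, tri_diag]
    ring
  · intro i j h
    exact tri_zero b i j h

lemma vdm_x (a : ℕ) {n : ℕ} :
    (Matrix.vandermonde (fun i : Fin n => (a:ℚ) + (i:ℕ))).det =
      ∏ i : Fin n, ∏ j ∈ Finset.Ioi i, (((j:ℕ):ℚ) - ((i:ℕ):ℚ)) := by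
  rw [Matrix.det_vandermonde]
  exact Finset.prod_congr rfl fun i _ => Finset.prod_congr rfl fun j _ => by ring

lemma vdm_y (b : ℕ) {n : ℕ} :
    (Matrix.vandermonde (yv b (n := n))).det =
      (∏ i : Fin n, (-1:ℚ)^(i:ℕ)) * ∏ i : Fin n, ∏ j ∈ Finset.Ioi i, (((j:ℕ):ℚ) - ((i:ℕ):ℚ)) := by
  rw [Matrix.det_vandermonde]
  have h1 : ∀ i : Fin n, ∏ j ∈ Finset.Ioi i, (yv b j - yv b i) =
      (-1:ℚ)^(n-1-(i:ℕ)) * ∏ j ∈ Finset.Ioi i, (((j:ℕ):ℚ) - ((i:ℕ):ℚ)) := by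
    intro i
    have : ∀ j ∈ Finset.Ioi i, (yv b j - yv b i) = -((((j:ℕ)):ℚ) - ((i:ℕ):ℚ)) := by
      intro j _; unfold yv; ring
    rw [Finset.prod_congr rfl this,
      Finset.prod_congr rfl (fun (j : Fin n) (_ : j ∈ Finset.Ioi i) => by ring :
        ∀ j ∈ Finset.Ioi i, -((((j:ℕ)):ℚ) - ((i:ℕ):ℚ)) = (-1) * ((((j:ℕ)):ℚ) - ((i:ℕ):ℚ))),
      Finset.prod_mul_distrib, Finset.prod_const, Fin.card_Ioi]
  rw [Finset.prod_congr rfl (fun i _ => h1 i), Finset.prod_mul_distrib]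
  congr 1
  rw [Fin.prod_univ_eq_prod_range (fun k => (-1:ℚ)^(n-1-k)), Fin.prod_univ_eq_prod_range (fun k => (-1:ℚ)^k)]
  exact Finset.prod_range_reflect (fun k => (-1:ℚ)^k) n

lemma detAmat (a b n : ℕ) :
    (Amat a b n).det = ∏ i : Fin n,
      (((a+i).factorial:ℚ) * ((b+i).factorial:ℚ) * ((n-1-(i:ℕ)).factorial:ℚ)
        / ((a+b+n+i).factorial:ℚ)) := by
  have hdeg : ∀ j : Fin n, (qpoly n b (j:ℕ)).natDegree < n := fun j => by
    have := j.isLt; rw [qpoly_natDegree n b j (by omega)]; omega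
  have hsg : (∏ i : Fin n, (-1:ℚ)^(i:ℕ)) ≠ 0 :=
    Finset.prod_ne_zero_iff.mpr fun i _ => pow_ne_zero _ (by norm_num)
  have e2' := det_eval_mat (yv b) (fun j : Fin n => qpoly n b (j:ℕ)) hdeg
  rw [step2, vdm_y] at e2'
  have eWK : (∏ i : Fin n, ∏ j ∈ Finset.Ioi i, (((j:ℕ):ℚ) - ((i:ℕ):ℚ)))
      * (Matrix.of (fun (i j : Fin n) => (qpoly n b (j:ℕ)).coeff i)).det
      = ∏ i : Fin n, ((((b+i).factorial : ℚ) / (b.factorial : ℚ)) * ((n-1-(i:ℕ)).factorial : ℚ)) := by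
    apply mul_left_cancel₀ hsg
    rw [mul_assoc] at e2'
    exact e2'.symm
  have e1 := step1 a b n
  rw [vdm_x, eWK] at e1
  have hS : ∀ i : Fin n, srow a b n i ≠ 0 := by
    intro i
    unfold srow
    positivity
  have e3 : (Amat a b n).det = ∏ i : Fin n,
      ((srow a b n i)⁻¹ * ((((b+i).factorial : ℚ) / (b.factorial : ℚ)) * ((n-1-(i:ℕ)).factorial : ℚ))) := by
    rw [Finset.prod_mul_distrib, Finset.prod_inv_distrib, ← e1, ← mul_assoc,
      inv_mul_cancel₀ (Finset.prod_ne_zero_iff.mpr fun i _ => hS i), one_mul]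
  rw [e3]
  apply Finset.prod_congr rfl
  intro i _
  unfold srow
  have h1 := fne b
  have h2 := fne (a+i)
  have h3 := fne (a+b+n+i)
  field_simp

end Det

lemma dlcm_pos (m : ℕ) : 0 < dlcm m := by
  rcases Nat.eq_zero_or_pos (dlcm m) with h | h
  · exfalso
    rw [dlcm, Finset.lcm_eq_zero_iff] at h
    obtain ⟨x, hx, hx0⟩ := h
    rw [Finset.mem_Icc] at hx
    simp only [id] at hx0
    omega
  · exact h

lemma dvd_dlcm {k m : ℕ} (h1 : 1 ≤ k) (h2 : k ≤ m) : k ∣ dlcm m :=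
  Finset.dvd_lcm (Finset.mem_Icc.mpr ⟨h1, h2⟩)

noncomputable def Nmat (a b n : ℕ) : Matrix (Fin n) (Fin n) ℤ :=
  Matrix.of fun i j => ∑ k ∈ range (b+1),
    (-1:ℤ)^k * (b.choose k) * (((dlcm (a+b+n+i) / (a+i+j+1+k) : ℕ)) : ℤ)

lemma Nmat_cast (a b n : ℕ) (i j : Fin n) :
    ((Nmat a b n i j : ℤ) : ℚ) = (dlcm (a+b+n+i) : ℚ) * Amat a b n i j := by
  have hij : (j:ℕ) ≤ n - 1 := by have := j.isLt; omega
  have hterm : ∀ k ∈ range (b+1),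
      ((((dlcm (a+b+n+i) / (a+i+j+1+k) : ℕ)) : ℚ)) =
        (dlcm (a+b+n+i) : ℚ) / (((a+i+j:ℕ):ℚ) + k + 1) := by
    intro k hk
    rw [Finset.mem_range] at hk
    have hdvd : (a+i+j+1+k) ∣ dlcm (a+b+n+i) := by
      apply dvd_dlcm (by omega)
      have := j.isLt
      omega
    rw [Nat.cast_div hdvd (by positivity)]
    push_cast
    ring_nf
  unfold Nmat
  rw [Matrix.of_apply, Int.cast_sum]
  rw [Finset.sum_congr rfl (fun k hk => by
    rw [Int.cast_mul, Int.cast_mul, Int.cast_pow, Int.cast_neg, Int.cast_one,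
      Int.cast_natCast, Int.cast_natCast, hterm k hk] :
    ∀ k ∈ range (b+1), ((((-1:ℤ)^k * (b.choose k) * (((dlcm (a+b+n+i) / (a+i+j+1+k) : ℕ)) : ℤ)) : ℤ) : ℚ)
      = ((-1:ℚ)^k * (b.choose k) * ((dlcm (a+b+n+i) : ℚ) / (((a+i+j:ℕ):ℚ) + k + 1))))]
  have := betaSum b (a+i+j)
  calc ∑ k ∈ range (b+1), ((-1:ℚ)^k * (b.choose k) * ((dlcm (a+b+n+i) : ℚ) / (((a+i+j:ℕ):ℚ) + k + 1)))
      = (dlcm (a+b+n+i) : ℚ) * ∑ k ∈ range (b+1), ((-1:ℚ)^k * (b.choose k) / (((a+i+j:ℕ):ℚ) + k + 1)) := by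
        rw [Finset.mul_sum]
        exact Finset.sum_congr rfl fun k _ => by ring
    _ = (dlcm (a+b+n+i) : ℚ) * Amat a b n i j := by
        rw [this]
        unfold Amat
        rw [Matrix.of_apply, show a+b+(i:ℕ)+(j:ℕ)+1 = a+(i:ℕ)+(j:ℕ)+b+1 by ring]

lemma Ndet_cast (a b n : ℕ) :
    (((Nmat a b n).det : ℤ) : ℚ) =
      (∏ i : Fin n, (dlcm (a+b+n+(i:ℕ)) : ℚ)) * (Amat a b n).det := by
  have h1 := RingHom.map_det (Int.castRingHom ℚ) (Nmat a b n)
  have h2 : (Nmat a b n).map (Int.castRingHom ℚ) =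
      Matrix.of (fun (i j : Fin n) => (dlcm (a+b+n+(i:ℕ)) : ℚ) * Amat a b n i j) := by
    ext i j
    simp only [Matrix.map_apply, Int.coe_castRingHom]
    exact Nmat_cast a b n i j
  rw [RingHom.mapMatrix_apply] at h1
  rw [show (((Nmat a b n).det : ℤ) : ℚ) = (Int.castRingHom ℚ) (Nmat a b n).det from rfl, h1, h2,
    Matrix.det_mul_column]

/-- For positive integers α, β, n,
`∏_{i=1}^n d_{α+β+n+i−3}·(n−i)!·(β+i−2)!/(α+i−1)_{β+n−1} ≥ 1`. -/
theorem improved_extrapolation (α β n : ℕ) (hα : 0 < α) (hβ : 0 < β) (hn : 0 < n) :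
    1 ≤ ∏ i ∈ Finset.Icc 1 n,
        (dlcm (α + β + n + i - 3) : ℚ) *
          (((n - i).factorial : ℚ) * ((β + i - 2).factorial : ℚ) /
            (Nat.ascFactorial (α + i - 1) (β + n - 1) : ℚ)) := by
  obtain ⟨a, rfl⟩ : ∃ a, α = a + 1 := ⟨α - 1, by omega⟩
  obtain ⟨b, rfl⟩ : ∃ b, β = b + 1 := ⟨β - 1, by omega⟩
  -- rewrite product over Icc as product over range
  rw [← Finset.Ico_add_one_right_eq_Icc, Finset.prod_Ico_eq_prod_range]
  have hr : n + 1 - 1 = n := by omega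
  rw [hr]
  have hterm : ∀ t ∈ range n,
      (dlcm ((a+1) + (b+1) + n + (1+t) - 3) : ℚ) *
          (((n - (1+t)).factorial : ℚ) * (((b+1) + (1+t) - 2).factorial : ℚ) /
            (Nat.ascFactorial ((a+1) + (1+t) - 1) ((b+1) + n - 1) : ℚ))
        = (dlcm (a+b+n+t) : ℚ) *
            (((a+t).factorial : ℚ) * ((b+t).factorial : ℚ) * ((n-1-t).factorial : ℚ)
              / ((a+b+n+t).factorial : ℚ)) := by
    intro t ht
    rw [Finset.mem_range] at ht
    have e1 : (a+1) + (b+1) + n + (1+t) - 3 = a+b+n+t := by omega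
    have e2 : n - (1+t) = n-1-t := by omega
    have e3 : (b+1) + (1+t) - 2 = b+t := by omega
    have e4 : (a+1) + (1+t) - 1 = (a+t)+1 := by omega
    have e5 : (b+1) + n - 1 = b+n := by omega
    rw [e1, e2, e3, e4, e5]
    have hasc := Nat.factorial_mul_ascFactorial (a+t) (b+n)
    have e6 : (a+t) + (b+n) = a+b+n+t := by omega
    rw [e6] at hasc
    have hasc' : ((Nat.ascFactorial ((a+t)+1) (b+n) : ℕ) : ℚ)
        = ((a+b+n+t).factorial : ℚ) / ((a+t).factorial : ℚ) := by
      rw [eq_div_iff (fne _)]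
      rw [mul_comm]
      exact_mod_cast congrArg (Nat.cast : ℕ → ℚ) hasc
    rw [hasc']
    have h1 := fne (a+t)
    have h2 := fne (a+b+n+t)
    rw [div_div_eq_mul_div]
    ring
  rw [Finset.prod_congr rfl hterm]
  have hpos : 0 < ∏ t ∈ range n, ((dlcm (a+b+n+t) : ℚ) *
      (((a+t).factorial : ℚ) * ((b+t).factorial : ℚ) * ((n-1-t).factorial : ℚ)
        / ((a+b+n+t).factorial : ℚ))) := by
    apply Finset.prod_pos
    intro t _
    have h0 : (0:ℚ) < dlcm (a+b+n+t) := by exact_mod_cast dlcm_pos (a+b+n+t)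
    have p1 := factorial_cast_pos (a+t)
    have p2 := factorial_cast_pos (b+t)
    have p3 := factorial_cast_pos (n-1-t)
    have p4 := factorial_cast_pos (a+b+n+t)
    exact mul_pos h0 (div_pos (mul_pos (mul_pos p1 p2) p3) p4)
  have heq : (∏ t ∈ range n, ((dlcm (a+b+n+t) : ℚ) *
      (((a+t).factorial : ℚ) * ((b+t).factorial : ℚ) * ((n-1-t).factorial : ℚ)
        / ((a+b+n+t).factorial : ℚ)))) = (((Nmat a b n).det : ℤ) : ℚ) := by
    rw [← Fin.prod_univ_eq_prod_range (fun t => ((dlcm (a+b+n+t) : ℚ) *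
      (((a+t).factorial : ℚ) * ((b+t).factorial : ℚ) * ((n-1-t).factorial : ℚ)
        / ((a+b+n+t).factorial : ℚ)))) n]
    rw [Finset.prod_mul_distrib, ← detAmat a b n]
    exact (Ndet_cast a b n).symm
  rw [heq] at hpos ⊢
  have h1 : 0 < (Nmat a b n).det := by exact_mod_cast hpos
  have h2 : (1:ℤ) ≤ (Nmat a b n).det := h1
  exact_mod_cast h2
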